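/- Let y = A_j x_j + n for a single used block j (U = {j}), with A_j of full column rank, blocks normalized so ‖(A_i^H A_i)^{-1/2} A_i^H‖_2 ≤ 1 for all i, and let i be any unused block. If ‖n‖_2 < (σ_min(A_j) − μ_B)‖x_j‖_2 / 2 and μ_B < σ_min(A_j), then ‖(A_i^H A_i)^{-1/2} A_i^H y‖_2 < ‖(A_j^H A_j)^{-1/2} A_j^H y‖_2. -/

import Mathlib

open Matrix Finset
open scoped ComplexOrder

noncomputable section
open scoped Classical

def enorm₂ {n : ℕ} (v : Fin n → ℂ) : ℝ := ‖(WithLp.equiv 2 (Fin n → ℂ)).symm v‖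

def snorm {m n : ℕ} (A : Matrix (Fin m) (Fin n) ℂ) : ℝ :=
  ‖LinearMap.toContinuousLinearMap (Matrix.toEuclideanLin A)‖

def invSqrt {n : ℕ} (M : Matrix (Fin n) (Fin n) ℂ) : Matrix (Fin n) (Fin n) ℂ :=
  if h : M.PosSemidef then (h.1.eigenvectorUnitary.1 * diagonal ((↑) ∘ (√·) ∘ h.1.eigenvalues) *
    (star h.1.eigenvectorUnitary : Matrix (Fin n) (Fin n) ℂ))⁻¹ else 0

def msqrt {n : ℕ} (M : Matrix (Fin n) (Fin n) ℂ) : Matrix (Fin n) (Fin n) ℂ :=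
  if h : M.PosSemidef then h.1.eigenvectorUnitary.1 * diagonal ((↑) ∘ (√·) ∘ h.1.eigenvalues) *
    (star h.1.eigenvectorUnitary : Matrix (Fin n) (Fin n) ℂ) else 0

/-- normalized correlation ‖(AᴴA)^{-1/2} Aᴴ r‖₂ -/
def ncorr {m k : ℕ} (A : Matrix (Fin m) (Fin k) ℂ) (r : Fin m → ℂ) : ℝ :=
  enorm₂ ((invSqrt (Aᴴ * A) * Aᴴ).mulVec r)

end

section Aux

open Matrix

lemma enorm₂_mulVec_le {m n : ℕ} (A : Matrix (Fin m) (Fin n) ℂ) (v : Fin n → ℂ) :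
    enorm₂ (A.mulVec v) ≤ snorm A * enorm₂ v := by
  have h := (LinearMap.toContinuousLinearMap (Matrix.toEuclideanLin A)).le_opNorm
    ((WithLp.equiv 2 (Fin n → ℂ)).symm v)
  simpa [enorm₂, snorm, Matrix.toLpLin_toLp] using h

lemma enorm₂_add_le {n : ℕ} (a b : Fin n → ℂ) : enorm₂ (a + b) ≤ enorm₂ a + enorm₂ b :=
  norm_add_le ((WithLp.equiv 2 (Fin n → ℂ)).symm a) ((WithLp.equiv 2 (Fin n → ℂ)).symm b)

lemma enorm₂_sub_le {n : ℕ} (a b : Fin n → ℂ) : enorm₂ a - enorm₂ b ≤ enorm₂ (a + b) := by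
  have h := enorm₂_add_le (a + b) (-b)
  have hab : a + b + -b = a := by abel
  rw [hab] at h
  have hnb : enorm₂ (-b) = enorm₂ b := by
    simpa [enorm₂] using norm_neg ((WithLp.equiv 2 (Fin n → ℂ)).symm b)
  linarith [h, hnb.le, hnb.ge]

lemma enorm₂_nonneg {n : ℕ} (v : Fin n → ℂ) : 0 ≤ enorm₂ v := norm_nonneg _

lemma enorm₂_pos {n : ℕ} {v : Fin n → ℂ} (hv : v ≠ 0) : 0 < enorm₂ v := by
  have : (WithLp.equiv 2 (Fin n → ℂ)).symm v ≠ 0 := by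
    intro h
    apply hv
    simpa using congrArg (WithLp.equiv 2 (Fin n → ℂ)) h
  exact norm_pos_iff.mpr this

lemma enorm₂_eq_of_gram_eq {m m' n : ℕ} (A : Matrix (Fin m) (Fin n) ℂ)
    (C : Matrix (Fin m') (Fin n) ℂ) (hg : Cᴴ * C = Aᴴ * A) (v : Fin n → ℂ) :
    enorm₂ (C.mulVec v) = enorm₂ (A.mulVec v) := by
  have key : ∀ {p : ℕ} (D : Matrix (Fin p) (Fin n) ℂ),
      enorm₂ (D.mulVec v) ^ 2 = RCLike.re ((star v) ⬝ᵥ ((Dᴴ * D).mulVec v)) := by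
    intro p D
    have h1 : enorm₂ (D.mulVec v) ^ 2 =
        RCLike.re (inner (𝕜 := ℂ) ((WithLp.equiv 2 (Fin p → ℂ)).symm (D.mulVec v))
          ((WithLp.equiv 2 (Fin p → ℂ)).symm (D.mulVec v))) :=
      norm_sq_eq_re_inner _
    rw [h1, EuclideanSpace.inner_toLp_toLp, dotProduct_comm]
    congr 1
    change star (D *ᵥ v) ⬝ᵥ (D *ᵥ v) = _
    rw [star_mulVec, ← dotProduct_mulVec, mulVec_mulVec]
  have h2 : enorm₂ (C.mulVec v) ^ 2 = enorm₂ (A.mulVec v) ^ 2 := by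
    rw [key C, key A, hg]
  have hC := enorm₂_nonneg (C.mulVec v)
  have hA := enorm₂_nonneg (A.mulVec v)
  nlinarith [h2, hC, hA]

lemma msqrt_facts {n : ℕ} {Mt : Matrix (Fin n) (Fin n) ℂ} (hps : Mt.PosSemidef) :
    (hps.1.eigenvectorUnitary.1 * diagonal ((↑) ∘ (√·) ∘ hps.1.eigenvalues) *
      (star hps.1.eigenvectorUnitary : Matrix (Fin n) (Fin n) ℂ)) *
    (hps.1.eigenvectorUnitary.1 * diagonal ((↑) ∘ (√·) ∘ hps.1.eigenvalues) *
      (star hps.1.eigenvectorUnitary : Matrix (Fin n) (Fin n) ℂ)) = Mt ∧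
    (hps.1.eigenvectorUnitary.1 * diagonal ((↑) ∘ (√·) ∘ hps.1.eigenvalues) *
      (star hps.1.eigenvectorUnitary : Matrix (Fin n) (Fin n) ℂ))ᴴ =
    (hps.1.eigenvectorUnitary.1 * diagonal ((↑) ∘ (√·) ∘ hps.1.eigenvalues) *
      (star hps.1.eigenvectorUnitary : Matrix (Fin n) (Fin n) ℂ)) := by
  set U : Matrix (Fin n) (Fin n) ℂ := hps.1.eigenvectorUnitary.1 with hU
  have hUU : (star hps.1.eigenvectorUnitary : Matrix (Fin n) (Fin n) ℂ) * U = 1 :=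
    Unitary.coe_star_mul_self _
  have hsU : (star hps.1.eigenvectorUnitary : Matrix (Fin n) (Fin n) ℂ) = Uᴴ := rfl
  have hD : diagonal (((↑) ∘ (√·) ∘ hps.1.eigenvalues) : Fin n → ℂ) *
      diagonal ((↑) ∘ (√·) ∘ hps.1.eigenvalues) =
      diagonal (RCLike.ofReal ∘ hps.1.eigenvalues) := by
    rw [diagonal_mul_diagonal]
    congr 1
    funext k
    simp only [Function.comp]
    rw [← Complex.ofReal_mul, Real.mul_self_sqrt (hps.eigenvalues_nonneg k)]
    rfl
  constructor
  · conv_rhs => rw [hps.1.spectral_theorem, Unitary.conjStarAlgAut_apply]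
    rw [← hD, hsU]
    rw [hsU] at hUU
    simp only [Matrix.mul_assoc]
    rw [← Matrix.mul_assoc Uᴴ U, hUU, Matrix.one_mul]
  · rw [hsU, conjTranspose_mul, conjTranspose_mul, conjTranspose_conjTranspose,
      diagonal_conjTranspose, Matrix.mul_assoc]
    congr 3
    funext k
    simp

lemma invSqrt_mul_self {n : ℕ} {Mt : Matrix (Fin n) (Fin n) ℂ} (hM : Mt.PosDef) :
    invSqrt Mt * Mt = msqrt Mt := by
  have hps := hM.posSemidef
  rw [invSqrt, msqrt, dif_pos hps, dif_pos hps]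
  set S := (hps.1.eigenvectorUnitary.1 * diagonal ((↑) ∘ (√·) ∘ hps.1.eigenvalues) *
      (star hps.1.eigenvectorUnitary : Matrix (Fin n) (Fin n) ℂ)) with hS
  have h1 : S * S = Mt := (msqrt_facts hps).1
  have hdet : IsUnit S.det := by
    have hd : S.det * S.det = Mt.det := by rw [← Matrix.det_mul, h1]
    have hpos : (0 : ℂ) < Mt.det := hM.det_pos
    have hne : Mt.det ≠ 0 := ne_of_gt hpos
    have : S.det ≠ 0 := by
      intro h0; apply hne; rw [← hd, h0, mul_zero]
    exact isUnit_iff_ne_zero.mpr this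
  calc S⁻¹ * Mt = S⁻¹ * (S * S) := by rw [h1]
    _ = (S⁻¹ * S) * S := (Matrix.mul_assoc S⁻¹ S S).symm
    _ = S := by rw [Matrix.nonsing_inv_mul _ hdet, one_mul]

lemma msqrt_gram {n : ℕ} {Mt : Matrix (Fin n) (Fin n) ℂ} (hM : Mt.PosDef) :
    (msqrt Mt)ᴴ * msqrt Mt = Mt := by
  have hps := hM.posSemidef
  rw [msqrt, dif_pos hps, (msqrt_facts hps).2, (msqrt_facts hps).1]

end Aux

/-- single-transmitter case — small noise implies the unused block has
strictly smaller normalized correlation than the used block. -/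
theorem single_block_zdgroth
    {M B : ℕ} {Ni : Fin B → ℕ}
    (A : (i : Fin B) → Matrix (Fin M) (Fin (Ni i)) ℂ)
    (j i : Fin B) (hij : i ≠ j)
    (xj : Fin (Ni j) → ℂ) (hxj : xj ≠ 0)
    (n : Fin M → ℂ)
    (hrank : ∀ k, ((A k)ᴴ * A k).PosDef)
    (hnorm : ∀ k, snorm (invSqrt ((A k)ᴴ * A k) * (A k)ᴴ) ≤ 1)
    (μB σj : ℝ)
    (hμ : ∀ k l, k ≠ l → snorm (invSqrt ((A k)ᴴ * A k) * ((A k)ᴴ * A l)) ≤ μB)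
    (hσ : ∀ v : Fin (Ni j) → ℂ, σj * enorm₂ v ≤ enorm₂ ((A j).mulVec v))
    (hμσ : μB < σj)
    (hn : enorm₂ n < (σj - μB) * enorm₂ xj / 2)
    (y : Fin M → ℂ)
    (hy : y = (A j).mulVec xj + n) :
    ncorr (A i) y < ncorr (A j) y := by
  subst hy
  set Wi := invSqrt ((A i)ᴴ * A i) * (A i)ᴴ with hWi
  set Wj := invSqrt ((A j)ᴴ * A j) * (A j)ᴴ with hWj
  have hx0 : 0 < enorm₂ xj := enorm₂_pos hxj
  have hn0 : 0 ≤ enorm₂ n := enorm₂_nonneg n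
  -- upper bound for block i
  have hisplit : Wi.mulVec ((A j).mulVec xj + n)
      = (invSqrt ((A i)ᴴ * A i) * ((A i)ᴴ * A j)).mulVec xj + Wi.mulVec n := by
    rw [Matrix.mulVec_add, Matrix.mulVec_mulVec, hWi, Matrix.mul_assoc]
  have hi1 : enorm₂ ((invSqrt ((A i)ᴴ * A i) * ((A i)ᴴ * A j)).mulVec xj) ≤ μB * enorm₂ xj := by
    calc enorm₂ ((invSqrt ((A i)ᴴ * A i) * ((A i)ᴴ * A j)).mulVec xj)
        ≤ snorm (invSqrt ((A i)ᴴ * A i) * ((A i)ᴴ * A j)) * enorm₂ xj := enorm₂_mulVec_le _ _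
      _ ≤ μB * enorm₂ xj := by
          exact mul_le_mul_of_nonneg_right (hμ i j hij) hx0.le
  have hi2 : enorm₂ (Wi.mulVec n) ≤ enorm₂ n := by
    calc enorm₂ (Wi.mulVec n) ≤ snorm Wi * enorm₂ n := enorm₂_mulVec_le _ _
      _ ≤ 1 * enorm₂ n := mul_le_mul_of_nonneg_right (hnorm i) hn0
      _ = enorm₂ n := one_mul _
  have hLHS : ncorr (A i) ((A j).mulVec xj + n) ≤ μB * enorm₂ xj + enorm₂ n := by
    unfold ncorr
    rw [← hWi, hisplit]
    exact le_trans (enorm₂_add_le _ _) (add_le_add hi1 hi2)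
  -- lower bound for block j
  have hjsig : Wj.mulVec ((A j).mulVec xj) = (msqrt ((A j)ᴴ * A j)).mulVec xj := by
    rw [Matrix.mulVec_mulVec, hWj, Matrix.mul_assoc, invSqrt_mul_self (hrank j)]
  have hj1 : σj * enorm₂ xj ≤ enorm₂ (Wj.mulVec ((A j).mulVec xj)) := by
    rw [hjsig, enorm₂_eq_of_gram_eq (A j) (msqrt ((A j)ᴴ * A j)) (msqrt_gram (hrank j)) xj]
    exact hσ xj
  have hj2 : enorm₂ (Wj.mulVec n) ≤ enorm₂ n := by
    calc enorm₂ (Wj.mulVec n) ≤ snorm Wj * enorm₂ n := enorm₂_mulVec_le _ _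
      _ ≤ 1 * enorm₂ n := mul_le_mul_of_nonneg_right (hnorm j) hn0
      _ = enorm₂ n := one_mul _
  have hRHS : σj * enorm₂ xj - enorm₂ n ≤ ncorr (A j) ((A j).mulVec xj + n) := by
    unfold ncorr
    rw [← hWj, Matrix.mulVec_add]
    calc σj * enorm₂ xj - enorm₂ n
        ≤ enorm₂ (Wj.mulVec ((A j).mulVec xj)) - enorm₂ (Wj.mulVec n) := by
          linarith [hj1, hj2]
      _ ≤ enorm₂ (Wj.mulVec ((A j).mulVec xj) + Wj.mulVec n) := enorm₂_sub_le _ _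
  linarith [hLHS, hRHS, hn]
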